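/- Consider the decoupled (ε = 0) reduced four-oscillator system φ̇_1 = q(φ_1), φ̇_2 = q(φ_2), φ̇_3 = g(φ_1) − g(φ_2), with g(φ) = −sin(φ − α) + r·sin(2φ) and q(φ) := g(φ) − g(−φ). If r < −|cos α|/2, then there exists δ > 0 such that every solution (φ_1, φ_2, φ_3) : [0,∞) → ℝ^3 with |φ_1(0)| < δ and |φ_2(0) − π| < δ satisfies φ_1(t) → 0 and φ_2(t) → π as t → ∞, and lim_{T→∞} φ_3(T)/T = 2 sin α. -/

import Mathlib

open Filter Real Set

/-- Scalar decay lemma: if `x * F x ≤ -c x²` for `|x| ≤ δ` and `f' = F ∘ f` on `[0,∞)`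
with `|f 0| < δ`, then `f → 0`. -/
lemma decay_lemma (F : ℝ → ℝ) (c δ : ℝ) (hc : 0 < c) (hδ : 0 < δ)
    (hF : ∀ x, |x| ≤ δ → x * F x ≤ -c * x ^ 2)
    (f : ℝ → ℝ) (hf : ∀ t, 0 ≤ t → HasDerivAt f (F (f t)) t)
    (h0 : |f 0| < δ) : Tendsto f atTop (nhds 0) := by
  have hVd : ∀ x : ℝ, 0 ≤ x → HasDerivAt (fun t => f t ^ 2) (2 * f x * F (f x)) x := by
    intro x hx
    have := (hf x hx).pow 2
    exact this.congr_deriv (by norm_num)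
  -- invariance: |f t| < δ for all t ≥ 0
  have hinv : ∀ t, 0 ≤ t → |f t| < δ := by
    by_contra hcon
    push_neg at hcon
    obtain ⟨t₀, ht₀, hft₀⟩ := hcon
    set A : Set ℝ := {t | 0 ≤ t ∧ δ ≤ |f t|} with hA
    have hne : A.Nonempty := ⟨t₀, ht₀, hft₀⟩
    have hbdd : BddBelow A := ⟨0, fun x hx => hx.1⟩
    set T := sInf A with hTdef
    have hT0 : 0 ≤ T := le_csInf hne fun x hx => hx.1
    have hfT : δ ≤ |f T| := by
      obtain ⟨u, -, hu_t, hu_mem⟩ := exists_seq_tendsto_sInf hne hbdd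
      have hcf : Tendsto (fun n => |f (u n)|) atTop (nhds |f T|) :=
        ((hf T hT0).continuousAt.tendsto.comp hu_t).abs
      exact ge_of_tendsto hcf (Eventually.of_forall fun n => (hu_mem n).2)
    have hTpos : 0 < T := by
      rcases hT0.lt_or_eq with h | h
      · exact h
      · exact absurd hfT (by rw [← h]; exact not_le.mpr h0)
    have hlt : ∀ s, 0 ≤ s → s < T → |f s| < δ := by
      intro s hs hsT
      by_contra h
      exact absurd (csInf_le hbdd ⟨hs, not_lt.mp h⟩) (not_le.mpr hsT)
    have hanti : AntitoneOn (fun t => f t ^ 2) (Icc 0 T) := by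
      apply antitoneOn_of_deriv_nonpos (convex_Icc 0 T)
      · exact fun x hx => ((hf x hx.1).continuousAt.pow 2).continuousWithinAt
      · rw [interior_Icc]
        exact fun x hx => ((hVd x hx.1.le).differentiableAt).differentiableWithinAt
      · rw [interior_Icc]
        intro x hx
        rw [(hVd x hx.1.le).deriv]
        have hb := hF (f x) (hlt x hx.1.le hx.2).le
        nlinarith [sq_nonneg (f x)]
    have h1 : f T ^ 2 ≤ f 0 ^ 2 :=
      hanti ⟨le_rfl, hT0⟩ ⟨hT0, le_rfl⟩ hT0
    nlinarith [sq_abs (f T), sq_abs (f 0), abs_nonneg (f 0)]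
  -- exponential decay of f²
  have hWd : ∀ x : ℝ, 0 ≤ x →
      HasDerivAt (fun t => f t ^ 2 * Real.exp (2 * c * t))
        (2 * f x * F (f x) * Real.exp (2 * c * x)
          + f x ^ 2 * (Real.exp (2 * c * x) * (2 * c * 1))) x := by
    intro x hx
    exact (hVd x hx).mul (((hasDerivAt_id x).const_mul (2 * c)).exp)
  have hWanti : AntitoneOn (fun t => f t ^ 2 * Real.exp (2 * c * t)) (Ici 0) := by
    apply antitoneOn_of_deriv_nonpos (convex_Ici 0)
    · intro x hx
      exact (((hf x hx).continuousAt.pow 2).mul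
        (Real.continuous_exp.comp (continuous_const.mul continuous_id)).continuousAt).continuousWithinAt
    · rw [interior_Ici]
      exact fun x hx => ((hWd x hx.le).differentiableAt).differentiableWithinAt
    · rw [interior_Ici]
      intro x hx
      rw [(hWd x hx.le).deriv]
      have hb := hF (f x) (hinv x hx.le).le
      have he : (0:ℝ) < Real.exp (2 * c * x) := Real.exp_pos _
      nlinarith [sq_nonneg (f x)]
  have hbound : ∀ t : ℝ, 0 ≤ t → f t ^ 2 ≤ f 0 ^ 2 * Real.exp (-(2 * c * t)) := by
    intro t ht
    have h1 : f t ^ 2 * Real.exp (2 * c * t) ≤ f 0 ^ 2 * Real.exp (2 * c * 0) :=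
      hWanti (self_mem_Ici) ht ht
    rw [mul_zero, Real.exp_zero, mul_one] at h1
    rw [Real.exp_neg]
    rw [← le_div_iff₀ (Real.exp_pos _)] at h1
    simpa [div_eq_mul_inv] using h1
  have hsq0 : Tendsto (fun t => f t ^ 2) atTop (nhds 0) := by
    apply squeeze_zero' (Eventually.of_forall fun t => sq_nonneg (f t))
      ((eventually_ge_atTop 0).mono fun t ht => hbound t ht)
    have h2 : Tendsto (fun t : ℝ => -(2 * c * t)) atTop atBot := by
      rw [tendsto_neg_atBot_iff]
      exact Tendsto.const_mul_atTop (by positivity) tendsto_id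
    have := (Real.tendsto_exp_atBot.comp h2).const_mul (f 0 ^ 2)
    simpa using this
  have habs : Tendsto (fun t => |f t|) atTop (nhds 0) := by
    have := (Real.continuous_sqrt.tendsto 0).comp hsq0
    simpa [Function.comp_def, Real.sqrt_sq_eq_abs] using this
  have hnabs : Tendsto (fun t => -|f t|) atTop (nhds 0) := by simpa using habs.neg
  exact tendsto_of_tendsto_of_tendsto_of_le_of_le hnabs
    habs (fun t => neg_abs_le (f t)) (fun t => le_abs_self (f t))

/-- If `f' → L` then `f T / T → L`. -/
lemma tendsto_div_of_deriv (f d : ℝ → ℝ) (L : ℝ)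
    (hf : ∀ t, 0 ≤ t → HasDerivAt f (d t) t)
    (hd : Tendsto d atTop (nhds L)) :
    Tendsto (fun T => f T / T) atTop (nhds L) := by
  rw [Metric.tendsto_atTop] at hd ⊢
  intro ε hε
  obtain ⟨N₀, hN₀⟩ := hd (ε / 2) (by positivity)
  set T₀ : ℝ := max N₀ 0 with hT₀def
  have hT₀0 : 0 ≤ T₀ := le_max_right _ _
  set C : ℝ := |f T₀ - L * T₀| with hCdef
  have key : ∀ T, T₀ ≤ T → |(f T - L * T) - (f T₀ - L * T₀)| ≤ ε / 2 * (T - T₀) := by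
    intro T hT
    have hder : ∀ x ∈ Icc T₀ T, HasDerivWithinAt (fun t => f t - L * t) (d x - L) (Icc T₀ T) x := by
      intro x hx
      have h := ((hf x (hT₀0.trans hx.1)).sub ((hasDerivAt_id x).const_mul L)).hasDerivWithinAt
        (s := Icc T₀ T)
      exact h.congr_deriv (by ring)
    have hbd : ∀ x ∈ Icc T₀ T, ‖d x - L‖ ≤ ε / 2 := by
      intro x hx
      have := hN₀ x ((le_max_left N₀ 0).trans hx.1)
      rw [Real.dist_eq] at this
      exact this.le
    have := Convex.norm_image_sub_le_of_norm_hasDerivWithin_le hder hbd (convex_Icc T₀ T)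
      (left_mem_Icc.mpr hT) (right_mem_Icc.mpr hT)
    rw [Real.norm_eq_abs, Real.norm_eq_abs, abs_of_nonneg (by linarith : (0:ℝ) ≤ T - T₀)] at this
    exact this
  refine ⟨max (T₀ + 1) (2 * (C + 1) / ε), fun T hT => ?_⟩
  have hT1 : T₀ + 1 ≤ T := (le_max_left _ _).trans hT
  have hT2 : 2 * (C + 1) / ε ≤ T := (le_max_right _ _).trans hT
  have hTpos : 0 < T := by linarith
  have hC0 : 0 ≤ C := abs_nonneg _
  have h1 : |f T - L * T| ≤ C + ε / 2 * (T - T₀) := by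
    have := key T (by linarith)
    calc |f T - L * T| = |(f T - L * T - (f T₀ - L * T₀)) + (f T₀ - L * T₀)| := by ring_nf
      _ ≤ |f T - L * T - (f T₀ - L * T₀)| + |f T₀ - L * T₀| := abs_add_le _ _
      _ ≤ ε / 2 * (T - T₀) + C := by linarith
      _ = C + ε / 2 * (T - T₀) := by ring
  rw [Real.dist_eq]
  have heq : f T / T - L = (f T - L * T) / T := by field_simp
  have h2 : |f T / T - L| = |f T - L * T| / T := by
    rw [heq, abs_div, abs_of_pos hTpos]
  rw [h2, div_lt_iff₀ hTpos]
  have h3 : 2 * (C + 1) ≤ ε * T := by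
    rw [div_le_iff₀ hε] at hT2
    linarith
  nlinarith

theorem four_oscillator_decoupled_basin
    (α r : ℝ) (g q : ℝ → ℝ)
    (hg : ∀ φ, g φ = -Real.sin (φ - α) + r * Real.sin (2 * φ))
    (hq : ∀ φ, q φ = g φ - g (-φ))
    (hr : r < -|Real.cos α| / 2) :
    ∃ δ > 0, ∀ φ₁ φ₂ φ₃ : ℝ → ℝ,
      (∀ t : ℝ, 0 ≤ t → HasDerivAt φ₁ (q (φ₁ t)) t) →
      (∀ t : ℝ, 0 ≤ t → HasDerivAt φ₂ (q (φ₂ t)) t) →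
      (∀ t : ℝ, 0 ≤ t → HasDerivAt φ₃ (g (φ₁ t) - g (φ₂ t)) t) →
      |φ₁ 0| < δ → |φ₂ 0 - Real.pi| < δ →
      Filter.Tendsto φ₁ Filter.atTop (nhds 0) ∧
      Filter.Tendsto φ₂ Filter.atTop (nhds Real.pi) ∧
      Filter.Tendsto (fun T : ℝ => φ₃ T / T) Filter.atTop
        (nhds (2 * Real.sin α)) := by
  -- explicit form of q
  have hq' : ∀ x, q x = 2 * Real.sin x * (2 * r * Real.cos x - Real.cos α) := by
    intro x
    rw [hq x, hg x, hg (-x)]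
    rw [show -x - α = -(x + α) by ring, show (2:ℝ) * -x = -(2 * x) by ring,
      Real.sin_neg, Real.sin_neg, Real.sin_add, Real.sin_sub, Real.sin_two_mul]
    ring
  have hqpi : ∀ x, q (x + Real.pi) = 2 * Real.sin x * (2 * r * Real.cos x + Real.cos α) := by
    intro x
    rw [hq' (x + Real.pi), Real.sin_add_pi, Real.cos_add_pi]
    ring
  set c₀ : ℝ := -|Real.cos α| - 2 * r with hc₀def
  have hc₀ : 0 < c₀ := by
    have h := abs_nonneg (Real.cos α)
    simp only [hc₀def]
    linarith
  have hrneg : r ≤ 0 := by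
    have h := abs_nonneg (Real.cos α)
    linarith
  set δ : ℝ := min 1 (Real.sqrt (c₀ / (2 * (|r| + 1)))) with hδdef
  have hrp : (0:ℝ) < 2 * (|r| + 1) := by positivity
  have hδpos : 0 < δ := by
    apply lt_min one_pos
    exact Real.sqrt_pos.mpr (by positivity)
  have hδ1 : δ ≤ 1 := min_le_left _ _
  have hδsq : |r| * δ ^ 2 ≤ c₀ / 2 := by
    have h1 : δ ≤ Real.sqrt (c₀ / (2 * (|r| + 1))) := min_le_right _ _
    have h2 : δ ^ 2 ≤ c₀ / (2 * (|r| + 1)) := by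
      have h2' := pow_le_pow_left₀ hδpos.le h1 2
      rwa [Real.sq_sqrt (by positivity)] at h2'
    have h3 : |r| * δ ^ 2 ≤ |r| * (c₀ / (2 * (|r| + 1))) :=
      mul_le_mul_of_nonneg_left h2 (abs_nonneg r)
    have h4 : |r| * (c₀ / (2 * (|r| + 1))) ≤ c₀ / 2 := by
      rw [mul_comm, div_mul_eq_mul_div, div_le_div_iff₀ hrp two_pos]
      nlinarith [abs_nonneg r, hc₀.le]
    linarith
  -- Jordan-type inequality
  have hsin : ∀ x : ℝ, |x| ≤ 1 → x ^ 2 / 2 ≤ x * Real.sin x := by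
    have hpos : ∀ y : ℝ, 0 < y → y ≤ 1 → y ^ 2 / 2 ≤ y * Real.sin y := by
      intro y hy hy1
      have k := mul_lt_mul_of_pos_left (Real.sin_gt_sub_cube hy) hy
      have hy2 : y ^ 2 ≤ 1 := by nlinarith
      nlinarith [k, hy2, sq_nonneg y, mul_pos hy hy]
    intro x hx
    rcases lt_trichotomy x 0 with h | h | h
    · have h1 : 0 < -x := by linarith
      have h2 : -x ≤ 1 := by rw [abs_of_neg h] at hx; exact hx
      have := hpos (-x) h1 h2
      rw [Real.sin_neg] at this
      nlinarith
    · simp [h]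
    · exact hpos x h (by rw [abs_of_pos h] at hx; exact hx)
  -- the negative factor
  have hfactor : ∀ x e : ℝ, |x| ≤ δ → |e| ≤ |Real.cos α| →
      2 * r * Real.cos x + e ≤ -(c₀ / 2) := by
    intro x e hx he
    have h1 : 1 - x ^ 2 / 2 ≤ Real.cos x := Real.one_sub_sq_div_two_le_cos
    have h2 : x ^ 2 ≤ δ ^ 2 := by nlinarith [abs_nonneg x, sq_abs x, sq_abs δ, hδpos.le]
    have h3 : e ≤ |Real.cos α| := (le_abs_self e).trans he
    have h5 : -r = |r| := by rw [abs_of_nonpos hrneg]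
    have h6 : 2 * r * Real.cos x ≤ 2 * r + |r| * x ^ 2 := by nlinarith
    have h7 : |r| * x ^ 2 ≤ |r| * δ ^ 2 := mul_le_mul_of_nonneg_left h2 (abs_nonneg r)
    linarith [hc₀def, hδsq]
  -- the key decay inequalities
  have hKey1 : ∀ x : ℝ, |x| ≤ δ → x * q x ≤ -(c₀ / 2) * x ^ 2 := by
    intro x hx
    rw [hq' x]
    have ha : x ^ 2 / 2 ≤ x * Real.sin x := hsin x (hx.trans hδ1)
    have hb : 2 * r * Real.cos x + -Real.cos α ≤ -(c₀ / 2) :=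
      hfactor x (-Real.cos α) hx (by rw [abs_neg])
    nlinarith [sq_nonneg x, hc₀]
  have hKey2 : ∀ x : ℝ, |x| ≤ δ → x * q (x + Real.pi) ≤ -(c₀ / 2) * x ^ 2 := by
    intro x hx
    rw [hqpi x]
    have ha : x ^ 2 / 2 ≤ x * Real.sin x := hsin x (hx.trans hδ1)
    have hb : 2 * r * Real.cos x + Real.cos α ≤ -(c₀ / 2) :=
      hfactor x (Real.cos α) hx (le_refl _)
    nlinarith [sq_nonneg x, hc₀]
  refine ⟨δ, hδpos, fun φ₁ φ₂ φ₃ hφ₁ hφ₂ hφ₃ h01 h02 => ?_⟩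
  have hc2 : 0 < c₀ / 2 := by linarith
  -- φ₁ → 0
  have H1 : Tendsto φ₁ atTop (nhds 0) := by
    apply decay_lemma q (c₀ / 2) δ hc2 hδpos (fun x hx => by
      have := hKey1 x hx; linarith) φ₁ hφ₁ h01
  -- φ₂ → π
  have H2' : Tendsto (fun t => φ₂ t - Real.pi) atTop (nhds 0) := by
    apply decay_lemma (fun x => q (x + Real.pi)) (c₀ / 2) δ hc2 hδpos (fun x hx => by
      have := hKey2 x hx; linarith) (fun t => φ₂ t - Real.pi)
      (fun t ht => by
        have := (hφ₂ t ht).sub_const Real.pi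
        simpa using this) h02
  have H2 : Tendsto φ₂ atTop (nhds Real.pi) := by
    have := H2'.add_const Real.pi
    simpa using this
  -- φ₃ T / T → 2 sin α
  have hgc : Continuous g := by
    have : g = fun φ => -Real.sin (φ - α) + r * Real.sin (2 * φ) := funext hg
    rw [this]; fun_prop
  have hg0 : g 0 = Real.sin α := by rw [hg]; simp
  have hgπ : g Real.pi = -Real.sin α := by
    rw [hg]
    rw [Real.sin_pi_sub, Real.sin_two_pi]
    ring
  have hdL : Tendsto (fun t => g (φ₁ t) - g (φ₂ t)) atTop (nhds (2 * Real.sin α)) := by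
    have h1 : Tendsto (fun t => g (φ₁ t)) atTop (nhds (g 0)) := (hgc.tendsto 0).comp H1
    have h2 : Tendsto (fun t => g (φ₂ t)) atTop (nhds (g Real.pi)) := (hgc.tendsto _).comp H2
    have := h1.sub h2
    rw [hg0, hgπ] at this
    convert this using 2
    ring
  exact ⟨H1, H2, tendsto_div_of_deriv φ₃ _ _ hφ₃ hdL⟩
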